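/- For all integers n ≥ 1, p and q with p ≥ 3 and 3 ≤ q ≤ (p−1)(p−2)/2 + 1, we have f(n·f(n, p−1, q−1), p, q) ≥ f(n, p−1, q−1). -/

import Mathlib

/-- `fEG n p q` is the Erdős–Gyárfás function `f(n, p, q)`: the minimum number of colors
in a `(p,q)`-coloring of the complete graph `K_n`, i.e. the least `k` for which there is
an edge-coloring of `K_n` with colors in `Fin k` such that among the edges spanned by
every set of `p` vertices at least `q` distinct colors appear. -/
noncomputable def fEG (n p q : ℕ) : ℕ :=
  sInf {k : ℕ | ∃ c : Sym2 (Fin n) → Fin k,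
    ∀ S : Finset (Fin n), S.card = p →
      q ≤ (((S ×ˢ S).filter fun e => e.1 ≠ e.2).image fun e => c s(e.1, e.2)).card}

lemma rainbowEG (N p q : ℕ) (hq : 2 * q ≤ p * p - p) :
    {k : ℕ | ∃ c : Sym2 (Fin N) → Fin k,
      ∀ S : Finset (Fin N), S.card = p →
        q ≤ (((S ×ˢ S).filter fun e => e.1 ≠ e.2).image fun e => c s(e.1, e.2)).card}.Nonempty := by
  classical
  refine ⟨Fintype.card (Sym2 (Fin N)), Fintype.equivFin (Sym2 (Fin N)), ?_⟩
  intro S hS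
  set c := Fintype.equivFin (Sym2 (Fin N)) with hc
  set L := (S ×ˢ S).filter (fun e => e.1 < e.2) with hL
  set G := (S ×ˢ S).filter (fun e => e.2 < e.1) with hG
  have hsub : (L.image fun e => c s(e.1, e.2)) ⊆
      (((S ×ˢ S).filter fun e => e.1 ≠ e.2).image fun e => c s(e.1, e.2)) := by
    apply Finset.image_subset_image
    rw [hL]
    intro x hx
    simp only [Finset.mem_filter] at hx ⊢
    exact ⟨hx.1, ne_of_lt hx.2⟩
  have hinj : (L.image fun e => c s(e.1, e.2)).card = L.card := by
    apply Finset.card_image_of_injOn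
    rintro ⟨a, b⟩ ha ⟨a', b'⟩ hb h
    simp only [hL, Finset.mem_coe, Finset.mem_filter] at ha hb
    have h2 : s(a, b) = s(a', b') := c.injective h
    rw [Sym2.eq_iff] at h2
    rcases h2 with ⟨rfl, rfl⟩ | ⟨rfl, rfl⟩
    · rfl
    · exact absurd (ha.2.trans hb.2) (lt_irrefl _)
  have hGL : G = L.image Prod.swap := by
    ext ⟨a, b⟩
    simp only [hG, hL, Finset.mem_filter, Finset.mem_image, Finset.mem_product, Prod.exists]
    constructor
    · rintro ⟨⟨ha, hb⟩, hlt⟩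
      exact ⟨b, a, ⟨⟨hb, ha⟩, hlt⟩, rfl⟩
    · rintro ⟨x, y, ⟨⟨hx, hy⟩, hlt⟩, h⟩
      cases h
      exact ⟨⟨hy, hx⟩, hlt⟩
  have hcardGL : G.card = L.card := by
    rw [hGL, Finset.card_image_of_injective _ Prod.swap_injective]
  have hunion : (S ×ˢ S).filter (fun e => e.1 ≠ e.2) = L ∪ G := by
    rw [hL, hG, ← Finset.filter_or]
    apply Finset.filter_congr
    intro x _
    exact ne_iff_lt_or_gt
  have hdisj : Disjoint L G := by
    rw [Finset.disjoint_left]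
    rintro ⟨a, b⟩ ha hb
    simp only [hL, hG, Finset.mem_filter] at ha hb
    exact absurd (ha.2.trans hb.2) (lt_irrefl _)
  have hoff : ((S ×ˢ S).filter fun e => e.1 ≠ e.2).card = p * p - p := by
    have : (S ×ˢ S).filter (fun e => e.1 ≠ e.2) = S.offDiag := by
      ext x; simp [Finset.mem_offDiag, and_assoc]
    rw [this, Finset.offDiag_card, hS]
  have h2L : 2 * L.card = p * p - p := by
    rw [← hoff, hunion, Finset.card_union_of_disjoint hdisj, hcardGL]
    ring
  have hqL : q ≤ L.card := by omega
  calc q ≤ L.card := hqL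
    _ = (L.image fun e => c s(e.1, e.2)).card := hinj.symm
    _ ≤ _ := Finset.card_le_card hsub

/-- For all integers `n ≥ 1`, `p ≥ 3` and `3 ≤ q ≤ (p−1)(p−2)/2 + 1`, we have
`f(n·f(n, p−1, q−1), p, q) ≥ f(n, p−1, q−1)`. -/
theorem stmt13 (n p q : ℕ) (hn : 1 ≤ n) (hp : 3 ≤ p) (hq : 3 ≤ q)
    (hq' : q ≤ (p - 1) * (p - 2) / 2 + 1) :
    fEG n (p - 1) (q - 1) ≤ fEG (n * fEG n (p - 1) (q - 1)) p q := by
  classical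
  set m := fEG n (p - 1) (q - 1) with hm
  rcases Nat.eq_zero_or_pos m with hm0 | hmpos
  · rw [hm0]; exact Nat.zero_le _
  set N := n * m with hN
  have hNpos : 0 < N := Nat.mul_pos hn hmpos
  -- arithmetic: 2 * q ≤ p * p - p
  have harith : 2 * q ≤ p * p - p := by
    obtain ⟨r, rfl⟩ : ∃ r, p = r + 3 := ⟨p - 3, by omega⟩
    have e1 : (r + 3 - 1) * (r + 3 - 2) = r * r + 3 * r + 2 := by
      have h1 : r + 3 - 1 = r + 2 := by omega
      have h2 : r + 3 - 2 = r + 1 := by omega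
      rw [h1, h2]; ring
    have e2 : (r + 3) * (r + 3) = r * r + 6 * r + 9 := by ring
    rw [e1] at hq'
    have hdm : (r * r + 3 * r + 2) / 2 * 2 ≤ r * r + 3 * r + 2 := Nat.div_mul_le_self _ _
    omega
  have hA := rainbowEG N p q harith
  have hmem := Nat.sInf_mem hA
  set k0 := sInf {k : ℕ | ∃ c : Sym2 (Fin N) → Fin k,
      ∀ S : Finset (Fin N), S.card = p →
        q ≤ (((S ×ˢ S).filter fun e => e.1 ≠ e.2).image fun e => c s(e.1, e.2)).card} with hk0
  have hfN : fEG N p q = k0 := rfl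
  rw [hfN]
  clear hk0 hA
  clear_value k0
  obtain ⟨c, hc⟩ := hmem
  by_contra hcon
  push_neg at hcon
  -- k0 < m
  have hk0pos : 0 < k0 := by
    have x : Sym2 (Fin N) := s(⟨0, hNpos⟩, ⟨0, hNpos⟩)
    exact (c x).pos
  set v0 : Fin N := ⟨0, hNpos⟩ with hv0
  set others := Finset.univ.erase v0 with hothers
  have hothcard : others.card = N - 1 := by
    rw [hothers, Finset.card_erase_of_mem (Finset.mem_univ _), Finset.card_univ,
      Fintype.card_fin]
  -- pigeonhole
  obtain ⟨a, -, ha⟩ : ∃ y ∈ (Finset.univ : Finset (Fin k0)),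
      n ≤ (others.filter fun t => c s(v0, t) = y).card := by
    apply Finset.exists_le_card_fiber_of_mul_le_card_of_maps_to
      (fun a _ => Finset.mem_univ _) ⟨⟨0, hk0pos⟩, Finset.mem_univ _⟩
    rw [Finset.card_univ, Fintype.card_fin, hothcard]
    have h1 : k0 * n ≤ (m - 1) * n := Nat.mul_le_mul_right n (by omega)
    have h2 : (m - 1) * n = m * n - n := by rw [Nat.sub_mul, one_mul]
    have h3 : N = m * n := by rw [hN, Nat.mul_comm]
    omega
  obtain ⟨T, hTsub, hTcard⟩ := Finset.exists_subset_card_eq ha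
  set f : Fin n → Fin N := fun i => (T.orderIsoOfFin hTcard i : Fin N) with hf
  have hfinj : Function.Injective f := fun i j h =>
    (T.orderIsoOfFin hTcard).injective (Subtype.ext h)
  have hfprop : ∀ i, f i ≠ v0 ∧ c s(v0, f i) = a := by
    intro i
    have := hTsub (T.orderIsoOfFin hTcard i).2
    simp only [hothers, Finset.mem_filter, Finset.mem_erase] at this
    exact ⟨this.1.1, this.2⟩
  set c' : Sym2 (Fin n) → Fin k0 := fun e => c (Sym2.map f e) with hc'
  have hc'pair : ∀ i j, c' s(i, j) = c s(f i, f j) := by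
    intro i j
    rw [hc']
    simp [Sym2.map_pair_eq]
  -- c' is a (p-1, q-1)-coloring of K_n
  have hmain : ∀ S : Finset (Fin n), S.card = p - 1 →
      q - 1 ≤ (((S ×ˢ S).filter fun e => e.1 ≠ e.2).image fun e => c' s(e.1, e.2)).card := by
    intro S hS
    set S' := insert v0 (S.image f) with hS'
    have hv0not : v0 ∉ S.image f := by
      intro hmem
      obtain ⟨i, -, hi⟩ := Finset.mem_image.1 hmem
      exact (hfprop i).1 hi
    have hS'card : S'.card = p := by
      rw [hS', Finset.card_insert_of_notMem hv0not,
        Finset.card_image_of_injective _ hfinj, hS]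
      omega
    have hq2 := hc S' hS'card
    have hsub : (((S' ×ˢ S').filter fun e => e.1 ≠ e.2).image fun e => c s(e.1, e.2)) ⊆
        insert a (((S ×ˢ S).filter fun e => e.1 ≠ e.2).image fun e => c' s(e.1, e.2)) := by
      intro x hx
      simp only [Finset.mem_image, Finset.mem_filter, Finset.mem_product] at hx
      obtain ⟨⟨u, v⟩, ⟨⟨hu, hv⟩, huv⟩, rfl⟩ := hx
      rw [hS', Finset.mem_insert] at hu hv
      rcases hu with rfl | hu
      · rcases hv with rfl | hv
        · exact absurd rfl huv
        · obtain ⟨j, hj, rfl⟩ := Finset.mem_image.1 hv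
          exact Finset.mem_insert.2 (Or.inl (hfprop j).2)
      · obtain ⟨i, hi, rfl⟩ := Finset.mem_image.1 hu
        rcases hv with rfl | hv
        · refine Finset.mem_insert.2 (Or.inl ?_)
          rw [Sym2.eq_swap]
          exact (hfprop i).2
        · obtain ⟨j, hj, rfl⟩ := Finset.mem_image.1 hv
          have hij : (i, j).1 ≠ (i, j).2 := by
            intro h
            exact huv (by simp only at h; rw [h])
          refine Finset.mem_insert.2 (Or.inr ?_)
          refine Finset.mem_image.2 ⟨(i, j), ?_, (hc'pair i j).symm⟩
          exact Finset.mem_filter.2 ⟨Finset.mem_product.2 ⟨hi, hj⟩, hij⟩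
    have h3 := Finset.card_le_card hsub
    have h4 := Finset.card_insert_le a
      (((S ×ˢ S).filter fun e => e.1 ≠ e.2).image fun e => c' s(e.1, e.2))
    omega
  have hle : m ≤ k0 := by
    rw [hm]
    unfold fEG
    exact Nat.sInf_le ⟨c', hmain⟩
  omega
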